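/- With notation as above, the number of zero eigenvalues of S + S^T equals the number of common eigenvalues (counted with multiplicity) of R and Π_ε; in particular S + S^T is nondegenerate if and only if p(π_k) ≠ 0 for all k, i.e., no root of x^n - ε is a root of the characteristic polynomial p of R. -/

import Mathlib

open Matrix Complex Polynomial

-- similar matrices have equal charpoly
lemma my_charpoly_conj {m : Type*} [Fintype m] [DecidableEq m] {R : Type*} [CommRing R]
    (U D : Matrix m m R) (hU : IsUnit U.det) :
    (U * D * U⁻¹).charpoly = D.charpoly := by
  have hUU : U * U⁻¹ = 1 := Matrix.mul_nonsing_inv U hU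
  set f : Matrix m m R →+* Matrix m m R[X] := (C : R →+* R[X]).mapMatrix with hf
  have key : charmatrix (U * D * U⁻¹) = f U * charmatrix D * f U⁻¹ := by
    have hcomm : ∀ A : Matrix m m R[X], Matrix.scalar m (X : R[X]) * A = A * Matrix.scalar m X :=
      fun A => (Matrix.scalar_commute (X : R[X]) (fun r' => Commute.all _ _) A).eq
    calc charmatrix (U * D * U⁻¹)
        = Matrix.scalar m (X : R[X]) - f (U * D * U⁻¹) := rfl
      _ = f U * Matrix.scalar m X * f U⁻¹ - f U * f D * f U⁻¹ := by
          rw [_root_.map_mul, _root_.map_mul]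
          congr 1
          rw [← hcomm (f U), mul_assoc, ← _root_.map_mul, hUU, _root_.map_one, mul_one]
      _ = f U * charmatrix D * f U⁻¹ := by
          rw [charmatrix, mul_sub, sub_mul]
  rw [Matrix.charpoly, Matrix.charpoly, key, Matrix.det_mul, Matrix.det_mul]
  have : (f U).det * (f U⁻¹).det = 1 := by
    rw [← Matrix.det_mul, ← _root_.map_mul, hUU, _root_.map_one, Matrix.det_one]
  calc (f U).det * (charmatrix D).det * (f U⁻¹).det
      = (charmatrix D).det * ((f U).det * (f U⁻¹).det) := by ring
    _ = (charmatrix D).det := by rw [this, mul_one]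

lemma my_charpoly_diagonal {m : Type*} [Fintype m] [DecidableEq m] {R : Type*} [CommRing R]
    (d : m → R) :
    (Matrix.diagonal d).charpoly = ∏ i, (X - C (d i)) := by
  have : charmatrix (Matrix.diagonal d) = Matrix.diagonal fun i => (X : R[X]) - C (d i) := by
    ext i j
    by_cases h : i = j
    · subst h; simp
    · simp [Matrix.charmatrix_apply_ne _ _ _ h, Matrix.diagonal_apply_ne _ h]
  rw [Matrix.charpoly, this, Matrix.det_diagonal]

lemma key_sum (n : ℕ) (hn : 2 ≤ n) (p : ℕ → ℝ)
    (hpal : ∀ k, 1 ≤ k → k ≤ n - 1 → p (n - k) = (-1 : ℝ) ^ n * p k)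
    (z : ℂ) (hz : z ^ n = (-1 : ℂ) ^ n) (i : Fin n) :
    ∑ j : Fin n, (if i = j then (2:ℂ)
        else (-1:ℂ)^n * p ((j:ℕ) - (i:ℕ) + ((i:ℕ) - (j:ℕ)))) * z ^ (j:ℕ)
      = (-1:ℂ)^n * (z ^ n + (∑ m ∈ Finset.Ioo 0 n, (p m : ℂ) * z ^ m) + (-1:ℂ)^n) * z ^ (i:ℕ) := by
  set ε : ℂ := (-1:ℂ)^n with hε
  have hεε : ε * ε = 1 := by rw [hε, ← mul_pow]; norm_num
  set i' : ℕ := (i : ℕ) with hi'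
  have hi : i' < n := i.isLt
  -- RHS simplification
  have hRHS : ε * (z ^ n + (∑ m ∈ Finset.Ioo 0 n, (p m : ℂ) * z ^ m) + ε) * z ^ i'
      = 2 * z ^ i' + ∑ m ∈ Finset.Ioo 0 n, ε * (p m : ℂ) * z ^ (m + i') := by
    have h1 : ∑ m ∈ Finset.Ioo 0 n, ε * (p m : ℂ) * z ^ (m + i')
        = ε * (∑ m ∈ Finset.Ioo 0 n, (p m : ℂ) * z ^ m) * z ^ i' := by
      rw [Finset.mul_sum, Finset.sum_mul]
      exact Finset.sum_congr rfl fun m _ => by rw [pow_add]; ring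
    rw [h1, hz]
    calc ε * (ε + (∑ m ∈ Finset.Ioo 0 n, (p m : ℂ) * z ^ m) + ε) * z ^ i'
        = (ε * ε) * z ^ i' + (ε * ε) * z ^ i'
          + ε * (∑ m ∈ Finset.Ioo 0 n, (p m : ℂ) * z ^ m) * z ^ i' := by ring
      _ = _ := by rw [hεε]; ring
  rw [hRHS]
  -- LHS as a sum over `range n`
  have hLHS : ∑ j : Fin n, (if i = j then (2:ℂ)
        else ε * p ((j:ℕ) - i' + (i' - (j:ℕ)))) * z ^ (j:ℕ)
      = ∑ j ∈ Finset.range n,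
        (if i' = j then (2:ℂ) else ε * p (j - i' + (i' - j))) * z ^ j := by
    rw [← Fin.sum_univ_eq_sum_range (fun j =>
      (if i' = j then (2:ℂ) else ε * p (j - i' + (i' - j))) * z ^ j) n]
    refine Finset.sum_congr rfl fun j _ => by
      congr 1
      simp only [Fin.ext_iff, hi']
  rw [hLHS]
  -- split LHS
  have hsplitL : ∑ j ∈ Finset.range n,
        (if i' = j then (2:ℂ) else ε * p (j - i' + (i' - j))) * z ^ j
      = (∑ j ∈ Finset.Ico 0 i', ε * (p (i' - j) : ℂ) * z ^ j)
        + (2 * z ^ i' + ∑ j ∈ Finset.Ioo i' n, ε * (p (j - i') : ℂ) * z ^ j) := by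
    rw [Finset.range_eq_Ico, ← Finset.sum_Ico_consecutive _ (Nat.zero_le i') (le_of_lt hi)]
    congr 1
    · refine Finset.sum_congr rfl fun j hj => ?_
      rw [Finset.mem_Ico] at hj
      rw [if_neg (by omega : ¬ i' = j), (by omega : j - i' = 0)]
      simp
    · rw [← Finset.Ioo_insert_left hi, Finset.sum_insert (by simp)]
      congr 1
      · simp
      · refine Finset.sum_congr rfl fun j hj => ?_
        rw [Finset.mem_Ioo] at hj
        rw [if_neg (by omega : ¬ i' = j), (by omega : i' - j = 0)]
        simp
  rw [hsplitL]
  -- split RHS sum at n - i'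
  have hIoo : Finset.Ioo 0 n = Finset.Ico 1 n := by ext x; simp; omega
  have hsplitR : ∑ m ∈ Finset.Ioo 0 n, ε * (p m : ℂ) * z ^ (m + i')
      = (∑ m ∈ Finset.Ico 1 (n - i'), ε * (p m : ℂ) * z ^ (m + i'))
        + ∑ m ∈ Finset.Ico (n - i') n, ε * (p m : ℂ) * z ^ (m + i') := by
    rw [hIoo, ← Finset.sum_Ico_consecutive _ (by omega : 1 ≤ n - i') (by omega : n - i' ≤ n)]
  rw [hsplitR]
  -- first reindexing: m ↦ m + i'
  have hA : ∑ m ∈ Finset.Ico 1 (n - i'), ε * (p m : ℂ) * z ^ (m + i')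
      = ∑ j ∈ Finset.Ioo i' n, ε * (p (j - i') : ℂ) * z ^ j := by
    refine Finset.sum_nbij' (fun m => m + i') (fun j => j - i') ?_ ?_ ?_ ?_ ?_
    · intro a ha; rw [Finset.mem_Ico] at ha
      show a + i' ∈ Finset.Ioo i' n; rw [Finset.mem_Ioo]; omega
    · intro a ha; rw [Finset.mem_Ioo] at ha
      show a - i' ∈ Finset.Ico 1 (n - i'); rw [Finset.mem_Ico]; omega
    · intro a ha; rw [Finset.mem_Ico] at ha; show a + i' - i' = a; omega
    · intro a ha; rw [Finset.mem_Ioo] at ha; show a - i' + i' = a; omega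
    · intro a ha; rw [Finset.mem_Ico] at ha
      show ε * (p a : ℂ) * z ^ (a + i') = ε * (p (a + i' - i') : ℂ) * z ^ (a + i')
      rw [(by omega : a + i' - i' = a)]
  -- second reindexing with palindrome identity: m ↦ m + i' - n
  have hB : ∑ m ∈ Finset.Ico (n - i') n, ε * (p m : ℂ) * z ^ (m + i')
      = ∑ j ∈ Finset.Ico 0 i', ε * (p (i' - j) : ℂ) * z ^ j := by
    have step : ∀ m ∈ Finset.Ico (n - i') n,
        ε * (p m : ℂ) * z ^ (m + i') = ε * (p (n - m) : ℂ) * z ^ (m + i' - n) := by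
      intro m hm
      rw [Finset.mem_Ico] at hm
      have hp : (p m : ℂ) = ε * (p (n - m) : ℂ) := by
        have h1 : p (n - (n - m)) = (-1:ℝ)^n * p (n - m) := hpal (n - m) (by omega) (by omega)
        have h2 : n - (n - m) = m := by omega
        rw [h2] at h1
        rw [h1]; push_cast [hε]; ring
      have hzp : z ^ (m + i') = z ^ (m + i' - n) * ε := by
        rw [← hz, ← pow_add]
        congr 1
        omega
      rw [hp, hzp]
      calc ε * (ε * (p (n - m) : ℂ)) * (z ^ (m + i' - n) * ε)
          = (ε * ε) * (ε * ((p (n - m) : ℂ) * z ^ (m + i' - n))) := by ring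
        _ = ε * (p (n - m) : ℂ) * z ^ (m + i' - n) := by rw [hεε]; ring
    rw [Finset.sum_congr rfl step]
    refine Finset.sum_nbij' (fun m => m + i' - n) (fun j => j + n - i') ?_ ?_ ?_ ?_ ?_
    · intro a ha; rw [Finset.mem_Ico] at ha
      show a + i' - n ∈ Finset.Ico 0 i'; rw [Finset.mem_Ico]; omega
    · intro a ha; rw [Finset.mem_Ico] at ha
      show a + n - i' ∈ Finset.Ico (n - i') n; rw [Finset.mem_Ico]; omega
    · intro a ha; rw [Finset.mem_Ico] at ha; show a + i' - n + n - i' = a; omega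
    · intro a ha; rw [Finset.mem_Ico] at ha; show a + n - i' + i' - n = a; omega
    · intro a ha; rw [Finset.mem_Ico] at ha
      show ε * (p (n - a) : ℂ) * z ^ (a + i' - n) = ε * (p (i' - (a + i' - n)) : ℂ) * z ^ (a + i' - n)
      rw [(by omega : i' - (a + i' - n) = n - a)]
  rw [hA, hB]
  ring

lemma roots_pow_n (n : ℕ) (hn : 2 ≤ n) (π : Fin n → ℂ)
    (hπ : ∀ k : Fin n, π k =
      Complex.exp (2 * Real.pi * Complex.I * (((k : ℕ) : ℂ) + if Even n then 0 else (1/2 : ℂ)) / n)) :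
    ∀ k : Fin n, π k ^ n = (-1 : ℂ) ^ n := by
  intro k
  have hn0 : (n : ℂ) ≠ 0 := by exact_mod_cast (by omega : n ≠ 0)
  set c : ℂ := if Even n then 0 else (1/2 : ℂ) with hc
  rw [hπ, ← Complex.exp_nat_mul]
  have harg : (n : ℂ) * (2 * Real.pi * Complex.I * (((k : ℕ) : ℂ) + c) / n)
      = ((k : ℕ) : ℤ) * (2 * Real.pi * Complex.I) + 2 * Real.pi * Complex.I * c := by
    push_cast
    field_simp
  rw [harg, Complex.exp_add, Complex.exp_int_mul_two_pi_mul_I, one_mul]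
  by_cases he : Even n
  · rw [hc, if_pos he]
    simp [he.neg_one_pow]
  · rw [hc, if_neg he]
    have : 2 * (Real.pi : ℂ) * Complex.I * (1/2) = Real.pi * Complex.I := by ring
    rw [this, Complex.exp_pi_mul_I, (Nat.not_even_iff_odd.mp he).neg_one_pow]

lemma roots_inj (n : ℕ) (hn : 2 ≤ n) (π : Fin n → ℂ)
    (hπ : ∀ k : Fin n, π k =
      Complex.exp (2 * Real.pi * Complex.I * (((k : ℕ) : ℂ) + if Even n then 0 else (1/2 : ℂ)) / n)) :
    Function.Injective π := by
  intro k l h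
  have hn0 : (n : ℂ) ≠ 0 := by exact_mod_cast (by omega : n ≠ 0)
  have hpi0 : (2 * (Real.pi : ℂ) * Complex.I) ≠ 0 := by
    simp [Real.pi_ne_zero, Complex.I_ne_zero]
  set c : ℂ := if Even n then 0 else (1/2 : ℂ) with hc
  rw [hπ, hπ, Complex.exp_eq_exp_iff_exists_int] at h
  obtain ⟨m, hm⟩ := h
  field_simp at hm
  have h3 : (2 * (Real.pi : ℂ) * Complex.I) * ((k : ℕ) : ℂ)
      = (2 * (Real.pi : ℂ) * Complex.I) * (((l : ℕ) : ℂ) + (m : ℂ) * (n : ℂ)) := by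
    linear_combination (2 * (Real.pi : ℂ) * Complex.I) * hm
  have h4 : ((k : ℕ) : ℂ) = ((l : ℕ) : ℂ) + (m : ℂ) * (n : ℂ) := mul_left_cancel₀ hpi0 h3
  have h5 : ((k : ℕ) : ℤ) = ((l : ℕ) : ℤ) + m * n := by
    exact_mod_cast h4
  have hk := k.isLt
  have hl := l.isLt
  have hm0 : m = 0 := by
    rcases lt_trichotomy m 0 with hlt | heq | hgt
    · have : m * (n : ℤ) ≤ (-1) * n :=
        mul_le_mul_of_nonneg_right (by omega) (by positivity)
      omega
    · exact heq
    · have : (1 : ℤ) * n ≤ m * n :=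
        mul_le_mul_of_nonneg_right (by omega) (by positivity)
      omega
  subst hm0
  simp only [Int.cast_zero, zero_mul, add_zero] at h5
  apply Fin.ext
  omega

open scoped Classical in
lemma rm_prod {m : Type*} [Fintype m] (d : m → ℂ) :
    Polynomial.rootMultiplicity 0 (∏ i, (X - C (d i)))
      = (Finset.univ.filter fun i => d i = 0).card := by
  have hq : (∏ i : m, (X - C (d i))) ≠ 0 :=
    Finset.prod_ne_zero_iff.mpr fun i _ => X_sub_C_ne_zero (d i)
  rw [← Polynomial.count_roots, Polynomial.roots_prod _ _ hq]
  simp only [Polynomial.roots_X_sub_C, Multiset.bind_singleton, Multiset.count_map]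
  have h1 : Multiset.card (Multiset.filter (fun a => 0 = d a) Finset.univ.val)
      = (Finset.univ.filter (fun a => 0 = d a)).card := by
    rw [Finset.card, Finset.filter_val]
  rw [h1]
  congr 1
  apply Finset.filter_congr
  intro k _
  simp [eq_comm]

open scoped Classical in
theorem stmt3 (n : ℕ) (hn : 2 ≤ n) (p : ℕ → ℝ)
    (hpal : ∀ k, 1 ≤ k → k ≤ n - 1 → p (n - k) = (-1 : ℝ) ^ n * p k)
    (S : Matrix (Fin n) (Fin n) ℝ)
    (hS : ∀ i j : Fin n, S i j =
      if i = j then 1 else if i < j then (-1 : ℝ) ^ n * p ((j : ℕ) - (i : ℕ)) else 0)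
    (π : Fin n → ℂ)
    (hπ : ∀ k : Fin n, π k =
      Complex.exp (2 * Real.pi * Complex.I * (((k : ℕ) : ℂ) + if Even n then 0 else (1/2 : ℂ)) / n))
    (pval : Fin n → ℂ)
    (hpval : ∀ k, pval k =
      (π k) ^ n + ∑ j ∈ Finset.Ioo 0 n, (p j : ℂ) * (π k) ^ j + (-1 : ℂ) ^ n) :
    Polynomial.rootMultiplicity 0 (Matrix.charpoly (S + Sᵀ)) =
      (Finset.univ.filter fun k : Fin n => pval k = 0).card ∧
    ((S + Sᵀ).det ≠ 0 ↔ ∀ k : Fin n, pval k ≠ 0) := by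
  have hzn := roots_pow_n n hn π hπ
  have hinj := roots_inj n hn π hπ
  have hεne : ((-1 : ℂ) ^ n) ≠ 0 := pow_ne_zero _ (by norm_num)
  set M : Matrix (Fin n) (Fin n) ℂ := (S + Sᵀ).map (algebraMap ℝ ℂ) with hM
  set V : Matrix (Fin n) (Fin n) ℂ := Matrix.of fun i k : Fin n => π k ^ (i : ℕ) with hV
  set d : Fin n → ℂ := fun k => (-1 : ℂ) ^ n * pval k with hd
  -- V is invertible
  have hVdet : V.det ≠ 0 := by
    have hVt : Vᵀ = Matrix.vandermonde π := by
      ext k i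
      simp [hV, Matrix.vandermonde]
    have h2 : V.det = (Matrix.vandermonde π).det := by
      rw [← Matrix.det_transpose, hVt]
    rw [h2, Ne, Matrix.det_vandermonde_eq_zero_iff]
    rintro ⟨i, j, hij, hne⟩
    exact hne (hinj hij)
  -- entries of M
  have hentry : ∀ i j : Fin n, M i j =
      (if i = j then (2:ℂ)
        else (-1:ℂ)^n * p ((j:ℕ) - (i:ℕ) + ((i:ℕ) - (j:ℕ)))) := by
    intro i j
    have : M i j = (((S i j + S j i : ℝ)) : ℂ) := by
      simp [hM, Matrix.map_apply, Matrix.add_apply, Matrix.transpose_apply]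
    rw [this, hS i j, hS j i]
    rcases lt_trichotomy i j with h | h | h
    · have hn1 : (i:ℕ) < (j:ℕ) := h
      rw [if_neg h.ne, if_pos h, if_neg h.ne', if_neg (not_lt.mpr h.le),
        if_neg h.ne, (by omega : (j:ℕ) - (i:ℕ) + ((i:ℕ) - (j:ℕ)) = (j:ℕ) - (i:ℕ))]
      push_cast
      ring
    · subst h
      simp
      norm_num
    · have hn1 : (j:ℕ) < (i:ℕ) := h
      rw [if_neg h.ne', if_neg (not_lt.mpr h.le), if_neg h.ne, if_pos h,
        if_neg h.ne',
        (by omega : (j:ℕ) - (i:ℕ) + ((i:ℕ) - (j:ℕ)) = (i:ℕ) - (j:ℕ))]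
      push_cast
      ring
  -- eigen relation
  have hMV : M * V = V * Matrix.diagonal d := by
    ext i k
    rw [Matrix.mul_apply, Matrix.mul_diagonal]
    have hsum : ∑ j, M i j * V j k
        = ∑ j : Fin n, (if i = j then (2:ℂ)
            else (-1:ℂ)^n * p ((j:ℕ) - (i:ℕ) + ((i:ℕ) - (j:ℕ)))) * (π k) ^ (j:ℕ) := by
      refine Finset.sum_congr rfl fun j _ => ?_
      rw [hentry i j]
      rfl
    rw [hsum, key_sum n hn p hpal (π k) (hzn k) i]
    have hrhs : V i k * d k = π k ^ (i:ℕ) * ((-1:ℂ)^n * pval k) := rfl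
    rw [hrhs, hpval k]
    ring
  have hVunit : IsUnit V.det := hVdet.isUnit
  have hM2 : M = V * Matrix.diagonal d * V⁻¹ := by
    have h1 : M * V * V⁻¹ = V * Matrix.diagonal d * V⁻¹ := by rw [hMV]
    rwa [mul_assoc, Matrix.mul_nonsing_inv V hVunit, mul_one] at h1
  have hcp : (S + Sᵀ).charpoly.map (algebraMap ℝ ℂ) = ∏ k, (X - C (d k)) := by
    rw [← Matrix.charpoly_map, ← hM, hM2, my_charpoly_conj _ _ hVunit, my_charpoly_diagonal]
  have hfilter : (Finset.univ.filter fun k : Fin n => d k = 0)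
      = (Finset.univ.filter fun k : Fin n => pval k = 0) := by
    apply Finset.filter_congr
    intro k _
    simp [hd, mul_eq_zero, hεne]
  constructor
  · have h0 : Polynomial.rootMultiplicity 0 (S + Sᵀ).charpoly
        = Polynomial.rootMultiplicity 0 ((S + Sᵀ).charpoly.map (algebraMap ℝ ℂ)) := by
      have := Polynomial.eq_rootMultiplicity_map
        (p := (S + Sᵀ).charpoly) (f := algebraMap ℝ ℂ)
        (fun a b hab => by exact_mod_cast hab) 0
      simpa using this
    rw [h0, hcp, rm_prod, hfilter]
  · have hdetM : M.det = ∏ k, d k := by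
      have h1 : M.det * V.det = (∏ k, d k) * V.det := by
        rw [← Matrix.det_mul, hMV, Matrix.det_mul, Matrix.det_diagonal]
        ring
      exact mul_right_cancel₀ hVdet h1
    have hdetC : (((S + Sᵀ).det : ℝ) : ℂ) = ∏ k, d k := by
      rw [← hdetM, hM]
      rw [show ((S + Sᵀ).map ⇑(algebraMap ℝ ℂ)) = (algebraMap ℝ ℂ).mapMatrix (S + Sᵀ) from rfl,
        ← RingHom.map_det]
      rfl
    constructor
    · intro hne k hk
      have : (((S + Sᵀ).det : ℝ) : ℂ) = 0 := by
        rw [hdetC, Finset.prod_eq_zero (Finset.mem_univ k)]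
        rw [hd]
        simp [hk]
      exact hne (by exact_mod_cast this)
    · intro hall
      intro h0
      have : (((S + Sᵀ).det : ℝ) : ℂ) = 0 := by rw [h0]; simp
      rw [hdetC] at this
      obtain ⟨k, _, hk⟩ := Finset.prod_eq_zero_iff.mp this
      rw [hd] at hk
      rcases mul_eq_zero.mp hk with h | h
      · exact hεne h
      · exact hall k h
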